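/- Let u : ℝ → ℝ be 6 times continuously differentiable (ContDiff ℝ 6) and fix x ∈ ℝ. Then the derivative-interpolation error h ↦ u'(x + h/2) - ( (1/h)·((3/64)u(x-h) - (3/2)u(x) + (93/64)u(x+h)) + (1/64)·(u'(x-h) - 12·u'(x) - 15·u'(x+h)) ) is O(h⁵) as h → 0 along nonzero h (IsBigO with respect to the punctured neighborhood filter 𝓝[≠] 0 of the function h ↦ h⁵), where u' denotes the derivative of u. -/

import Mathlib

open Asymptotics Filter Finset

lemma bigO_of_hasDerivAt {F F' : ℝ → ℝ} (hF : ∀ t, HasDerivAt F (F' t) t) (h0 : F 0 = 0)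
    {n : ℕ} (hO : F' =O[nhds 0] fun h => h ^ n) : F =O[nhds 0] fun h => h ^ (n + 1) := by
  rcases hO.exists_pos with ⟨c, hc, hbd⟩
  rw [IsBigOWith, Metric.eventually_nhds_iff] at hbd
  obtain ⟨δ, δpos, hδ⟩ := hbd
  rw [isBigO_iff]
  refine ⟨c, Metric.eventually_nhds_iff.mpr ⟨δ, δpos, ?_⟩⟩
  intro y hy
  have hyn : ‖y‖ < δ := by simpa [Real.dist_eq] using hy
  have hmv := Convex.norm_image_sub_le_of_norm_hasDerivWithin_le
    (f := F) (f' := F') (s := Metric.closedBall (0 : ℝ) ‖y‖) (C := c * ‖y‖ ^ n) (x := 0) (y := y)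
    (fun t _ => (hF t).hasDerivWithinAt)
    (fun t ht => by
      have htle : ‖t‖ ≤ ‖y‖ := by simpa [Real.dist_eq] using Metric.mem_closedBall.mp ht
      have h1 : ‖F' t‖ ≤ c * ‖t ^ n‖ := hδ (by simpa [Real.dist_eq] using htle.trans_lt hyn)
      refine h1.trans ?_
      rw [norm_pow]
      exact mul_le_mul_of_nonneg_left (pow_le_pow_left₀ (norm_nonneg t) htle n) hc.le)
    (convex_closedBall _ _)
    (Metric.mem_closedBall.mpr (by simp [Real.dist_eq]))
    (Metric.mem_closedBall.mpr (by simp [Real.dist_eq]))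
  rw [h0, sub_zero, sub_zero] at hmv
  calc ‖F y‖ ≤ c * ‖y‖ ^ n * ‖y‖ := hmv
  _ = c * ‖y ^ (n + 1)‖ := by rw [norm_pow]; ring

/-- Peano-form Taylor: order `n-1` expansion has error `O(h^n)`. -/
lemma taylor_isBigO : ∀ (n : ℕ) (v : ℝ → ℝ), ContDiff ℝ (n : ℕ) v → ∀ x0 : ℝ,
    (fun h : ℝ => v (x0 + h) -
        ∑ k ∈ Finset.range n, iteratedDeriv k v x0 / k.factorial * h ^ k)
      =O[nhds 0] fun h => h ^ n := by
  intro n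
  induction n with
  | zero =>
    intro v hv x0
    simp only [Finset.range_zero, Finset.sum_empty, sub_zero, pow_zero]
    have : Filter.Tendsto (fun h : ℝ => v (x0 + h)) (nhds 0) (nhds (v x0)) := by
      have := (hv.continuous.tendsto x0).comp
        (by simpa using (continuous_const.add continuous_id).tendsto (0 : ℝ))
      exact this
    exact this.isBigO_one ℝ
  | succ n ih =>
    intro v hv x0
    have hv' : ContDiff ℝ (n : ℕ) (deriv v) := by
      have h1 : ContDiff ℝ ((n : WithTop ℕ∞) + 1) v := by exact_mod_cast hv
      exact (contDiff_succ_iff_deriv.mp h1).2.2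
    have hIH := ih (deriv v) hv' x0
    set F : ℝ → ℝ := fun h => v (x0 + h) -
        ∑ k ∈ Finset.range (n + 1), iteratedDeriv k v x0 / k.factorial * h ^ k with hFdef
    set F' : ℝ → ℝ := fun h => deriv v (x0 + h) -
        ∑ k ∈ Finset.range n, iteratedDeriv k (deriv v) x0 / k.factorial * h ^ k with hF'def
    have hder : ∀ t : ℝ, HasDerivAt F (F' t) t := by
      intro t
      have h1 : HasDerivAt (fun h : ℝ => v (x0 + h)) (deriv v (x0 + t)) t := by
        have hd : DifferentiableAt ℝ v (x0 + t) :=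
          (hv.differentiable (by simp)).differentiableAt
        simpa [Function.comp_def] using (hd.hasDerivAt.comp t ((hasDerivAt_id t).const_add x0))
      have h2 : HasDerivAt
          (fun h : ℝ => ∑ k ∈ Finset.range (n + 1), iteratedDeriv k v x0 / k.factorial * h ^ k)
          (∑ k ∈ Finset.range n, iteratedDeriv k (deriv v) x0 / k.factorial * t ^ k) t := by
        have h3 : HasDerivAt
            (fun h : ℝ => ∑ k ∈ Finset.range (n + 1), iteratedDeriv k v x0 / k.factorial * h ^ k)
            (∑ k ∈ Finset.range (n + 1),
              iteratedDeriv k v x0 / k.factorial * (k * t ^ (k - 1))) t := by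
          apply HasDerivAt.fun_sum
          intro k _
          exact (hasDerivAt_pow k t).const_mul _
        convert h3 using 1
        rw [Finset.sum_range_succ' (fun k => iteratedDeriv k v x0 / k.factorial * (k * t ^ (k - 1)))]
        simp only [Nat.cast_zero, zero_mul, mul_zero, add_zero, Nat.cast_ofNat]
        apply Finset.sum_congr rfl
        intro k _
        rw [← iteratedDeriv_succ']
        have : ((k + 1).factorial : ℝ) = (k + 1) * k.factorial := by
          push_cast [Nat.factorial_succ]; ring
        rw [this]
        have hkf : (k.factorial : ℝ) ≠ 0 := Nat.cast_ne_zero.mpr (Nat.factorial_ne_zero k)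
        field_simp
        push_cast [Nat.add_sub_cancel_left, Nat.add_sub_cancel]
        ring
      exact h1.sub h2
    have hF0 : F 0 = 0 := by
      simp only [hFdef, add_zero]
      rw [Finset.sum_range_succ' (fun k => iteratedDeriv k v x0 / k.factorial * (0:ℝ) ^ k)]
      simp
    exact bigO_of_hasDerivAt hder hF0 hIH

lemma taylor_isBigO_comp (n : ℕ) (v : ℝ → ℝ) (hv : ContDiff ℝ (n : ℕ) v) (x0 a : ℝ) :
    (fun h : ℝ => v (x0 + a * h) -
        ∑ k ∈ Finset.range n, iteratedDeriv k v x0 / k.factorial * (a * h) ^ k)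
      =O[nhds 0] fun h => h ^ n := by
  have base := taylor_isBigO n v hv x0
  have ht : Filter.Tendsto (fun h : ℝ => a * h) (nhds 0) (nhds 0) := by
    simpa using ((continuous_mul_left a).tendsto (0 : ℝ))
  have comp := base.comp_tendsto ht
  simp only [Function.comp_def] at comp
  refine comp.trans ?_
  have h1 := (isBigO_refl (fun h : ℝ => h ^ n) (nhds 0)).const_mul_left (a ^ n)
  refine IsBigO.congr_left h1 ?_
  intro h
  rw [mul_pow]

theorem hermite_full_stencil_derivative_fifth_order
    (u : ℝ → ℝ) (hu : ContDiff ℝ 6 u) (x : ℝ) :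
    (fun h : ℝ =>
        deriv u (x + h / 2) -
          ((1 / h) * ((3/64) * u (x - h) - (3/2) * u x + (93/64) * u (x + h))
            + (1/64) * (deriv u (x - h) - 12 * deriv u x - 15 * deriv u (x + h))))
      =O[nhdsWithin 0 {0}ᶜ] fun h : ℝ => h ^ 5 := by
  have hu6 : ContDiff ℝ ((6 : ℕ) : WithTop ℕ∞) u := by exact_mod_cast hu
  have hu5 : ContDiff ℝ ((5 : ℕ) : WithTop ℕ∞) (deriv u) := by
    have h1 : ContDiff ℝ (((5 : ℕ) : WithTop ℕ∞) + 1) u := by exact_mod_cast hu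
    exact (contDiff_succ_iff_deriv.mp h1).2.2
  have T1 := taylor_isBigO_comp 5 (deriv u) hu5 x (1/2)
  have T2 := taylor_isBigO_comp 5 (deriv u) hu5 x (-1)
  have T3 := taylor_isBigO_comp 5 (deriv u) hu5 x 1
  have T4 := taylor_isBigO_comp 6 u hu6 x (-1)
  have T5 := taylor_isBigO_comp 6 u hu6 x 1
  have l : nhdsWithin (0:ℝ) {0}ᶜ ≤ nhds 0 := nhdsWithin_le_nhds
  have A := (T1.sub (T2.const_mul_left (1/64 : ℝ))).add (T3.const_mul_left (15/64 : ℝ))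
  have B0 := (T4.const_mul_left ((3:ℝ)/64)).add (T5.const_mul_left ((93:ℝ)/64))
  have B1 := (isBigO_refl (fun h : ℝ => 1/h) (nhdsWithin (0:ℝ) {0}ᶜ)).mul (B0.mono l)
  have B2 : (fun h : ℝ => (1/h) * h ^ 6) =O[nhdsWithin (0:ℝ) {0}ᶜ] fun h => h ^ 5 := by
    have he : (fun h : ℝ => (1/h) * h ^ 6) =ᶠ[nhdsWithin (0:ℝ) {0}ᶜ] (fun h => h ^ 5) := by
      filter_upwards [self_mem_nhdsWithin] with h hh
      have hne : h ≠ 0 := hh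
      field_simp
    exact he.trans_isBigO (isBigO_refl _ _)
  have B := B1.trans B2
  have C := (A.mono l).sub B
  refine Filter.EventuallyEq.trans_isBigO ?_ C
  filter_upwards [self_mem_nhdsWithin] with h hh
  have hne : h ≠ 0 := hh
  have r1 : iteratedDeriv 1 u x = iteratedDeriv 0 (deriv u) x := by
    rw [show (1:ℕ) = 0 + 1 from rfl, iteratedDeriv_succ']
  have r2 : iteratedDeriv 2 u x = iteratedDeriv 1 (deriv u) x := by
    rw [show (2:ℕ) = 1 + 1 from rfl, iteratedDeriv_succ']
  have r3 : iteratedDeriv 3 u x = iteratedDeriv 2 (deriv u) x := by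
    rw [show (3:ℕ) = 2 + 1 from rfl, iteratedDeriv_succ']
  have r4 : iteratedDeriv 4 u x = iteratedDeriv 3 (deriv u) x := by
    rw [show (4:ℕ) = 3 + 1 from rfl, iteratedDeriv_succ']
  have r5 : iteratedDeriv 5 u x = iteratedDeriv 4 (deriv u) x := by
    rw [show (5:ℕ) = 4 + 1 from rfl, iteratedDeriv_succ']
  simp only [Finset.sum_range_succ, Finset.sum_range_zero, iteratedDeriv_zero, r1, r2, r3, r4, r5,
    Nat.factorial, show x + h / 2 = x + 1/2 * h by ring, show x - h = x + -1 * h by ring,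
    show (x : ℝ) + h = x + 1 * h by ring]
  push_cast
  field_simp
  ring
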